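/- If R : ℝ^N → ℝ is uniformly convex with modulus h satisfying liminf_{s→∞} h(s)/s = ∞ along the norm (or more simply: if R is uniformly convex on a finite-dimensional space), then for any subgradient ξ ∈ ∂R(x̂), the Bregman distance B^R_ξ(·, x̂) is coercive, i.e., B^R_ξ(x, x̂)/‖x‖ → ∞ as ‖x‖ → ∞. -/
import Mathlib


theorem bregman_coercive {N : ℕ} (R : (Fin N → ℝ) → ℝ)
    (hR : ∃ h : ℝ → ℝ, (∀ s, 0 ≤ s → 0 ≤ h s) ∧ (∀ s, 0 ≤ s → (h s = 0 ↔ s = 0)) ∧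
      ∀ x y : Fin N → ℝ, ∀ t ∈ Set.Icc (0:ℝ) 1,
        R (t • x + (1 - t) • y) + t * (1 - t) * h ‖x - y‖ ≤ t * R x + (1 - t) * R y)
    (xh ξ : Fin N → ℝ)
    (hsub : ∀ x, R xh + ∑ i, ξ i * (x i - xh i) ≤ R x) :
    Filter.Tendsto
      (fun x : Fin N → ℝ => (R x - R xh - ∑ i, ξ i * (x i - xh i)) / ‖x‖)
      (Filter.comap norm Filter.atTop) Filter.atTop := by
  obtain ⟨h, hpos, hzero, huc⟩ := hR
  set g : (Fin N → ℝ) → ℝ := fun x => R x - R xh - ∑ i, ξ i * (x i - xh i) with hgdef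
  clear_value g
  have hgnn : ∀ x, 0 ≤ g x := by
    intro x
    have := hsub x
    simp only [hgdef]
    linarith
  have hgxh : g xh = 0 := by simp [hgdef]
  -- linearity of the affine part
  have hlin : ∀ (t : ℝ) (x y : Fin N → ℝ),
      (∑ i, ξ i * ((t • x + (1 - t) • y) i - xh i))
        = t * (∑ i, ξ i * (x i - xh i)) + (1 - t) * (∑ i, ξ i * (y i - xh i)) := by
    intro t x y
    rw [Finset.mul_sum, Finset.mul_sum, ← Finset.sum_add_distrib]
    refine Finset.sum_congr rfl fun i _ => ?_
    simp only [Pi.add_apply, Pi.smul_apply, smul_eq_mul]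
    ring
  -- g inherits uniform convexity
  have hgconv : ∀ x y : Fin N → ℝ, ∀ t ∈ Set.Icc (0:ℝ) 1,
      g (t • x + (1 - t) • y) + t * (1 - t) * h ‖x - y‖ ≤ t * g x + (1 - t) * g y := by
    intro x y t ht
    have h1 := huc x y t ht
    have h2 := hlin t x y
    simp only [hgdef]
    linarith
  set c : ℝ := h 2 / 4 with hcdef
  have hc : 0 < c := by
    have h1 : 0 ≤ h 2 := hpos 2 (by norm_num)
    have h2 : h 2 ≠ 0 := by
      intro h0
      have := (hzero 2 (by norm_num)).1 h0
      norm_num at this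
    have : 0 < h 2 := lt_of_le_of_ne h1 (Ne.symm h2)
    simp only [hcdef]; linarith
  clear_value c
  -- along a unit ray: increments grow linearly
  have hinc : ∀ u : Fin N → ℝ, ‖u‖ = 1 → ∀ n : ℕ,
      c * n ≤ g (xh + ((n : ℝ) + 1) • u) - g (xh + (n : ℝ) • u) := by
    intro u hu
    have step : ∀ n : ℕ,
        g (xh + ((n : ℝ) + 1) • u) + c
          ≤ g (xh + ((n : ℝ) + 2) • u) / 2 + g (xh + (n : ℝ) • u) / 2 := by
      intro n
      have key := hgconv (xh + ((n : ℝ) + 2) • u) (xh + (n : ℝ) • u) (1/2)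
        (by constructor <;> norm_num)
      have hmid : (1/2 : ℝ) • (xh + ((n : ℝ) + 2) • u) + (1 - 1/2 : ℝ) • (xh + (n : ℝ) • u)
          = xh + ((n : ℝ) + 1) • u := by
        have e : (1 - 1/2 : ℝ) = 1/2 := by norm_num
        rw [e]
        module
      have hdiff : (xh + ((n : ℝ) + 2) • u) - (xh + (n : ℝ) • u) = (2 : ℝ) • u := by
        module
      rw [hmid, hdiff] at key
      have hnrm : ‖(2 : ℝ) • u‖ = 2 := by
        rw [norm_smul, hu]; simp
      rw [hnrm] at key
      simp only [hcdef]
      linarith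
    intro n
    induction n with
    | zero =>
      have h1 := step 0
      have h0 : g (xh + (0 : ℝ) • u) = 0 := by
        rw [show xh + (0 : ℝ) • u = xh by module, hgxh]
      simp only [Nat.cast_zero, mul_zero] at h1 ⊢
      have := hgnn (xh + ((0:ℝ) + 1) • u)
      linarith
    | succ n ih =>
      have h1 := step n
      have e : ((n + 1 : ℕ) : ℝ) = (n : ℝ) + 1 := by push_cast; ring
      rw [e, show ((n : ℝ) + 1) + 1 = (n : ℝ) + 2 from by ring]
      have h3 : c * ((n : ℝ) + 1) = c * (n : ℝ) + c := by ring
      linarith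
  -- quadratic growth along unit rays
  have hquad : ∀ u : Fin N → ℝ, ‖u‖ = 1 → ∀ n : ℕ,
      c * ((n : ℝ) * ((n : ℝ) - 1)) / 2 ≤ g (xh + (n : ℝ) • u) := by
    intro u hu
    intro n
    induction n with
    | zero =>
      simp only [Nat.cast_zero]
      rw [show xh + (0 : ℝ) • u = xh by module, hgxh]
      norm_num
    | succ n ih =>
      have h1 := hinc u hu n
      have e : ((n + 1 : ℕ) : ℝ) = (n : ℝ) + 1 := by push_cast; ring
      rw [e]
      have h2 : c * (((n : ℝ) + 1) * ((n : ℝ) + 1 - 1)) / 2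
          = c * ((n : ℝ) * ((n : ℝ) - 1)) / 2 + c * (n : ℝ) := by ring
      linarith
  -- final growth estimate, then conclude
  rw [Filter.tendsto_atTop]
  intro M
  have hev : ∀ᶠ x : Fin N → ℝ in Filter.comap norm Filter.atTop,
      max (2 * ‖xh‖ + 4) (‖xh‖ + 2 + 4 * M / c) ≤ ‖x‖ :=
    Filter.tendsto_comap.eventually (Filter.eventually_ge_atTop _)
  filter_upwards [hev] with x hx
  have hx1 : 2 * ‖xh‖ + 4 ≤ ‖x‖ := le_trans (le_max_left _ _) hx
  have hx2 : ‖xh‖ + 2 + 4 * M / c ≤ ‖x‖ := le_trans (le_max_right _ _) hx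
  have ha : (0:ℝ) ≤ ‖xh‖ := norm_nonneg _
  have hr0 : (0:ℝ) < ‖x‖ := by linarith
  set s : ℝ := ‖x - xh‖ with hsdef
  have hs1 : ‖x‖ - ‖xh‖ ≤ s := norm_sub_norm_le x xh
  have hs0 : (0:ℝ) < s := by linarith
  set u : Fin N → ℝ := s⁻¹ • (x - xh) with hudef
  have hu : ‖u‖ = 1 := by
    rw [hudef, norm_smul, norm_inv, norm_norm, ← hsdef, inv_mul_cancel₀ hs0.ne']
  set n : ℕ := ⌊s⌋₊ with hndef
  have hn1 : (n : ℝ) ≤ s := Nat.floor_le hs0.le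
  have hn2 : s - 1 ≤ (n : ℝ) := by
    have := Nat.lt_floor_add_one s
    linarith
  -- g x ≥ g (xh + n • u)
  have hmono : g (xh + (n : ℝ) • u) ≤ g x := by
    set t : ℝ := (n : ℝ) / s with htdef
    have ht0 : 0 ≤ t := div_nonneg (Nat.cast_nonneg n) hs0.le
    have ht1 : t ≤ 1 := by
      rw [htdef, div_le_one hs0]; exact hn1
    have key := hgconv x xh t ⟨ht0, ht1⟩
    have hpt : t • x + (1 - t) • xh = xh + (n : ℝ) • u := by
      rw [hudef, smul_smul]
      have hts : t = (n : ℝ) * s⁻¹ := by rw [htdef, div_eq_mul_inv]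
      rw [← hts]
      module
    rw [hpt, hgxh] at key
    have hhs : 0 ≤ h ‖x - xh‖ := hpos _ (norm_nonneg _)
    have htt : 0 ≤ t * (1 - t) := mul_nonneg ht0 (by linarith)
    have hgx := hgnn x
    nlinarith [key, mul_nonneg htt hhs, mul_le_of_le_one_left hgx ht1]
  have hub := hquad u hu n
  have hgx' : g x = R x - R xh - ∑ i, ξ i * (x i - xh i) := by rw [hgdef]
  rw [← hgx']
  rw [le_div_iff₀ hr0]
  -- now pure arithmetic: M * ‖x‖ ≤ g x
  have hM : 4 * M ≤ (‖x‖ - ‖xh‖ - 2) * c := by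
    have hle : 4 * M / c ≤ ‖x‖ - ‖xh‖ - 2 := by linarith
    calc 4 * M = (4 * M / c) * c := by field_simp
    _ ≤ (‖x‖ - ‖xh‖ - 2) * c := mul_le_mul_of_nonneg_right hle hc.le
  have hnlow : ‖x‖ - ‖xh‖ - 1 ≤ (n : ℝ) := by linarith
  have hfac1 : ‖x‖ / 2 ≤ ‖x‖ - ‖xh‖ - 1 := by linarith
  have hfac2 : (0:ℝ) ≤ ‖x‖ - ‖xh‖ - 2 := by linarith
  have hp1 : ‖x‖ - ‖xh‖ - 2 ≤ (n : ℝ) - 1 := by linarith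
  have hprod : (‖x‖ - ‖xh‖ - 1) * (‖x‖ - ‖xh‖ - 2) ≤ (n : ℝ) * ((n : ℝ) - 1) :=
    mul_le_mul hnlow hp1 hfac2 (Nat.cast_nonneg n)
  have hc1 : c * ((‖x‖ - ‖xh‖ - 1) * (‖x‖ - ‖xh‖ - 2)) ≤ c * ((n : ℝ) * ((n : ℝ) - 1)) :=
    mul_le_mul_of_nonneg_left hprod hc.le
  have hf1 : (‖x‖ / 2) * ((‖x‖ - ‖xh‖ - 2) * c) ≤ (‖x‖ - ‖xh‖ - 1) * ((‖x‖ - ‖xh‖ - 2) * c) :=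
    mul_le_mul_of_nonneg_right hfac1 (mul_nonneg hfac2 hc.le)
  have hf2 : (‖x‖ / 2) * (4 * M) ≤ (‖x‖ / 2) * ((‖x‖ - ‖xh‖ - 2) * c) :=
    mul_le_mul_of_nonneg_left hM (by linarith)
  have hGx : c * ((n : ℝ) * ((n : ℝ) - 1)) / 2 ≤ g x := le_trans hub hmono
  nlinarith [hf1, hf2, hc1, hGx]
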